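/- Let n ≥ 3 be odd and let A be the 0–1 adjacency matrix of the cycle graph Cₙ (so A(i,j) = 1 iff |i−j| ≡ 1 mod n). Then A is nonsingular, every principal minor of A of order n−1 is nonzero, and all n principal minors of A of order n−1 are equal; consequently A⁻¹ is equimodular with constant diagonal. -/

import Mathlib

open Matrix Finset

noncomputable def stmtg (n k : ℕ) : ℝ :=
  (if k % 2 = 1 then (-1:ℝ)^((k-1)/2) else (-1:ℝ)^(k/2+(n-1)/2)) * (1/2)

lemma stmtg_pm (n k : ℕ) : stmtg n k = 1/2 ∨ stmtg n k = -(1/2) := by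
  unfold stmtg
  split <;>
  · rcases Nat.even_or_odd ((k-1)/2) with h | h <;>
    rcases Nat.even_or_odd (k/2+(n-1)/2) with h2 | h2 <;>
    simp [h.neg_one_pow, h2.neg_one_pow, Even.neg_one_pow, Odd.neg_one_pow]

lemma stmtg_key {p : ℕ} (hn : 3 ≤ p + 1) (hodd : Odd (p + 1)) (k : Fin (p + 1)) :
    stmtg (p+1) ((k-1 : Fin (p+1))).val + stmtg (p+1) ((k+1 : Fin (p+1))).val
      = if k = 0 then 1 else 0 := by
  have h1 : ((1 : Fin (p+1))).val = 1 := by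
    rw [Fin.val_one']
    exact Nat.mod_eq_of_lt (by omega)
  have hsub : ((k - 1 : Fin (p+1))).val = (p + 1 - 1 + k.val) % (p+1) := by
    rw [Fin.sub_def, h1]
  have hadd : ((k + 1 : Fin (p+1))).val = (k.val + 1) % (p+1) := by
    rw [Fin.add_def, h1]
  have hkv : k.val < p + 1 := k.isLt
  have hodd2 : p % 2 = 0 := by
    obtain ⟨m, hm⟩ := hodd; omega
  rcases Nat.lt_trichotomy k.val 0 with h | h | h
  · omega
  · -- k = 0
    have hk0 : k = 0 := by ext; simp [← h]; exact (Nat.mod_eq_of_lt hkv).symm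
    rw [hk0] at hsub hadd ⊢
    rw [if_pos rfl]
    simp only [Fin.val_zero] at hsub hadd
    rw [hsub, hadd]
    have e1 : (p + 1 - 1 + 0) % (p+1) = p := Nat.mod_eq_of_lt (by omega)
    have e2 : (0 + 1) % (p+1) = 1 := Nat.mod_eq_of_lt (by omega)
    rw [e1, e2]
    unfold stmtg
    have e4 : p/2 + (p+1-1)/2 = p := by omega
    rw [if_neg (by omega), if_pos (by omega), e4]
    have : Even p := Nat.even_iff.mpr hodd2
    rw [this.neg_one_pow]
    norm_num
  · -- k ≠ 0
    have hk0 : k ≠ 0 := by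
      intro hk; rw [hk] at h; simp at h
    rw [if_neg hk0, hsub, hadd]
    rcases Nat.lt_trichotomy k.val p with h2 | h2 | h2
    · have e1 : (p + 1 - 1 + k.val) % (p+1) = k.val - 1 := by
        have e : p + 1 - 1 + k.val = (p+1) + (k.val - 1) := by omega
        rw [e, Nat.add_mod_left]
        exact Nat.mod_eq_of_lt (by omega)
      have e2 : (k.val + 1) % (p+1) = k.val + 1 := Nat.mod_eq_of_lt (by omega)
      rw [e1, e2]
      unfold stmtg
      rcases Nat.even_or_odd k.val with he | he
      · have hv2 : k.val % 2 = 0 := Nat.even_iff.mp he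
        rw [if_pos (by omega), if_pos (by omega)]
        have e3 : (k.val + 1 - 1)/2 = (k.val - 1 - 1)/2 + 1 := by omega
        rw [e3, pow_succ]
        ring
      · have hv2 : k.val % 2 = 1 := Nat.odd_iff.mp he
        rw [if_neg (by omega), if_neg (by omega)]
        have e3 : (k.val+1)/2 + (p+1-1)/2 = ((k.val-1)/2 + (p+1-1)/2) + 1 := by omega
        rw [e3, pow_succ]
        ring
    · -- k.val = p
      have e1 : (p + 1 - 1 + k.val) % (p+1) = p - 1 := by
        have e : p + 1 - 1 + k.val = (p+1) + (p - 1) := by omega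
        rw [e, Nat.add_mod_left]
        exact Nat.mod_eq_of_lt (by omega)
      have e2 : (k.val + 1) % (p+1) = 0 := by
        rw [h2, Nat.mod_self]
      rw [e1, e2]
      unfold stmtg
      rw [if_pos (by omega), if_neg (by omega)]
      have e3 : 0/2 + (p+1-1)/2 = (p - 1 - 1)/2 + 1 := by omega
      rw [e3, pow_succ]
      ring
    · omega

theorem stmt17 {n : ℕ} (hn : 3 ≤ n) (hodd : Odd n)
    (A : Matrix (Fin n) (Fin n) ℝ)
    (hA : ∀ i j : Fin n,
      A i j = if (i.val + 1) % n = j.val ∨ (j.val + 1) % n = i.val then 1 else 0) :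
    A.det ≠ 0 ∧
    (∀ i : Fin n,
      (A.submatrix (fun x : {j : Fin n // j ≠ i} => (x : Fin n))
        (fun x : {j : Fin n // j ≠ i} => (x : Fin n))).det ≠ 0) ∧
    (∀ i i' : Fin n,
      (A.submatrix (fun x : {j : Fin n // j ≠ i} => (x : Fin n))
        (fun x : {j : Fin n // j ≠ i} => (x : Fin n))).det =
      (A.submatrix (fun x : {j : Fin n // j ≠ i'} => (x : Fin n))
        (fun x : {j : Fin n // j ≠ i'} => (x : Fin n))).det) ∧
    ∃ α : ℝ, (∀ i j, A⁻¹ i j = α ∨ A⁻¹ i j = -α) ∧ (∀ i j, A⁻¹ i i = A⁻¹ j j) := by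
  obtain ⟨p, rfl⟩ : ∃ p, n = p + 1 := ⟨n - 1, by omega⟩
  have h1v : ((1 : Fin (p+1))).val = 1 := by
    rw [Fin.val_one']; exact Nat.mod_eq_of_lt (by omega)
  have hA' : ∀ i j : Fin (p+1), A i j = if i + 1 = j ∨ j + 1 = i then 1 else 0 := by
    intro i j
    rw [hA]
    have e : ∀ a b : Fin (p+1), ((a.val + 1) % (p+1) = b.val) ↔ (a + 1 = b) := by
      intro a b
      rw [Fin.ext_iff, Fin.add_def, h1v]
    simp only [e]
  set B : Matrix (Fin (p+1)) (Fin (p+1)) ℝ := fun i j => stmtg (p+1) (j - i).val with hB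
  have hAB : A * B = 1 := by
    ext i j
    rw [mul_apply]
    have hne : i + 1 ≠ i - 1 := by
      intro hcontra
      have hval : (i.val + 1) % (p+1) = (p + 1 - 1 + i.val) % (p+1) := by
        have := congrArg Fin.val hcontra
        rw [Fin.add_def, Fin.sub_def, h1v] at this
        exact this
      rcases Nat.lt_trichotomy i.val p with h3 | h3 | h3
      · rw [Nat.mod_eq_of_lt (by omega)] at hval
        rcases Nat.eq_zero_or_pos i.val with h4 | h4
        · rw [h4, Nat.mod_eq_of_lt (by omega)] at hval
          omega
        · have e : p + 1 - 1 + i.val = (p+1) + (i.val - 1) := by omega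
          rw [e, Nat.add_mod_left, Nat.mod_eq_of_lt (by omega)] at hval
          omega
      · have e : i.val + 1 = p + 1 := by omega
        rw [e, Nat.mod_self] at hval
        have e2 : p + 1 - 1 + i.val = (p+1) + (p - 1) := by omega
        rw [e2, Nat.add_mod_left, Nat.mod_eq_of_lt (by omega)] at hval
        omega
      · exact absurd i.isLt (by omega)
    have step : ∀ l, A i l * B l j =
        if l ∈ ({i+1, i-1} : Finset (Fin (p+1))) then B l j else 0 := by
      intro l
      rw [hA']
      by_cases hl : l ∈ ({i+1, i-1} : Finset (Fin (p+1)))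
      · rw [if_pos hl, if_pos, one_mul]
        simp only [mem_insert, mem_singleton] at hl
        rcases hl with hl | hl
        · left; rw [hl]
        · right; rw [hl]; abel
      · rw [if_neg hl, if_neg, zero_mul]
        simp only [mem_insert, mem_singleton, not_or] at hl
        rintro (hc | hc)
        · exact hl.1 hc.symm
        · exact hl.2 (by rw [← hc]; abel)
    rw [Finset.sum_congr rfl (fun l _ => step l), Finset.sum_ite_mem, univ_inter,
      Finset.sum_pair hne]
    show stmtg (p+1) (j - (i+1)).val + stmtg (p+1) (j - (i-1)).val = _
    have e1 : j - (i+1) = (j - i) - 1 := by abel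
    have e2 : j - (i-1) = (j - i) + 1 := by abel
    rw [e1, e2, stmtg_key (by omega) hodd (j - i), one_apply]
    by_cases hij : i = j
    · rw [if_pos hij, if_pos (by rw [hij, sub_self])]
    · rw [if_neg hij, if_neg (fun hc => hij ((sub_eq_zero.mp hc).symm))]
  have hinv : A⁻¹ = B := inv_eq_right_inv hAB
  have hdetu : IsUnit A.det := isUnit_det_of_right_inverse hAB
  have hdet : A.det ≠ 0 := hdetu.ne_zero
  have hdiag : ∀ i : Fin (p+1), A⁻¹ i i = stmtg (p+1) 0 := by
    intro i
    rw [hinv]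
    show stmtg (p+1) (i - i).val = _
    rw [sub_self, Fin.val_zero]
  have hg0 : stmtg (p+1) 0 ≠ 0 := by
    rcases stmtg_pm (p+1) 0 with h | h <;> rw [h] <;> norm_num
  have hadj : ∀ i : Fin (p+1),
      (A.submatrix (fun x : {j : Fin (p+1) // j ≠ i} => (x : Fin (p+1)))
        (fun x : {j : Fin (p+1) // j ≠ i} => (x : Fin (p+1)))).det = A.adjugate i i := by
    intro i
    rw [Matrix.adjugate_fin_succ_eq_det_submatrix]
    have heven : Even ((i : ℕ) + i) := ⟨i, rfl⟩
    rw [heven.neg_one_pow, one_mul]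
    rw [← Matrix.det_submatrix_equiv_self (finSuccAboveEquiv i)]
    congr 1
  have hadjval : ∀ i : Fin (p+1), A.adjugate i i = A.det * stmtg (p+1) 0 := by
    intro i
    have := congrFun (congrFun (Matrix.inv_def A) i) i
    rw [Matrix.smul_apply, Ring.inverse_eq_inv', hdiag i] at this
    field_simp at this
    rw [this, smul_eq_mul, ← mul_assoc, mul_one_div_cancel hdet, one_mul]
  refine ⟨hdet, fun i => ?_, fun i i' => ?_, 1/2, fun i j => ?_, fun i j => ?_⟩
  · rw [hadj i, hadjval i]
    exact mul_ne_zero hdet hg0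
  · rw [hadj i, hadjval i, hadj i', hadjval i']
  · rw [hinv]
    exact stmtg_pm (p+1) _
  · rw [hdiag i, hdiag j]
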